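/- For λ = (N,...,N) ∈ ℕ^m, an SL_m-invariant polynomial p in the multilinear subspace V^{⊗mN} ⊂ C[y_a^{(i)}] lies in the level-ℓ conformal block space (i.e., (e^z_{1,m})^{ℓ+1} p = 0 in addition to singular vector conditions) if and only if p vanishes to order ≥ N − ℓ on the linear subspace A(z) = { y : y_a^{(m)} = z_a y_a^{(1)} for all a }. -/

import Mathlib

open MvPolynomial Finset

namespace CB
noncomputable section
variable {m M : ℕ}

abbrev Pol (m M : ℕ) := MvPolynomial (Fin m × Fin M) ℂ

/-- monomial exponent vector attached to a choice function `c`. -/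
def mc (c : Fin M → Fin m) : (Fin m × Fin M) →₀ ℕ :=
  Finsupp.equivFunOnFinite.symm (fun v => if v.1 = c v.2 then 1 else 0)

@[simp] lemma mc_apply (c : Fin M → Fin m) (v : Fin m × Fin M) :
    mc c v = if v.1 = c v.2 then 1 else 0 := rfl

lemma mc_injective : Function.Injective (mc (m := m) (M := M)) := by
  intro c c' h
  funext a
  have h2 := DFunLike.congr_fun h (c a, a)
  simp only [mc_apply] at h2
  rw [if_pos trivial] at h2
  by_contra hne
  rw [if_neg hne] at h2
  exact one_ne_zero h2

variable (i0 i1 : Fin m) (z : Fin M → ℂ)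

def D (b : Fin M) (q : Pol m M) : Pol m M := X (i0, b) * pderiv (i1, b) q

def Phi (q : Pol m M) : Pol m M := ∑ a : Fin M, C (z a) * X (i0, a) * pderiv (i1, a) q

def sg : Fin m × Fin M → Pol m M := fun v => if v.1 = i1 then C (z v.2) * X (i0, v.2) else X v

def pr (q : Pol m M) : Pol m M := aeval (sg i0 i1 z) q

def wt (c : Fin M → Fin m) : ℕ := (univ.filter fun a => c a = i1).card

def Good (n : ℕ) (q : Pol m M) : Prop :=
  ∀ d ∈ q.support, ∃ c : Fin M → Fin m, d = mc c ∧ wt i1 c = n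

variable {i0 i1 : Fin m} {z : Fin M → ℂ}

lemma mc_flip (h01 : i0 ≠ i1) {c : Fin M → Fin m} {a : Fin M} (ha : c a = i1) :
    Finsupp.single (i0,a) 1 + (mc c - Finsupp.single (i1,a) 1)
      = mc (Function.update c a i0) := by
  ext ⟨i, b⟩
  simp only [Finsupp.coe_add, Pi.add_apply, Finsupp.tsub_apply, Finsupp.single_apply,
    Function.update_apply, Prod.mk.injEq, mc_apply]
  rcases eq_or_ne b a with hb | hb
  · subst hb
    rw [ha]
    rcases eq_or_ne i i0 with hi | hi
    · subst hi; simp [h01, Ne.symm h01]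
    · rcases eq_or_ne i i1 with hi1 | hi1
      · subst hi1; simp [Ne.symm h01, Ne.symm hi]
      · simp [Ne.symm hi, Ne.symm hi1, hi, hi1]
  · simp [hb, Ne.symm hb]

lemma mc_split (h01 : i0 ≠ i1) {c : Fin M → Fin m} {a : Fin M} (ha : c a = i1) :
    mc c = Finsupp.single (i1,a) 1 + (mc c - Finsupp.single (i1,a) 1) := by
  ext ⟨i, b⟩
  simp only [Finsupp.coe_add, Pi.add_apply, Finsupp.tsub_apply, Finsupp.single_apply,
    Prod.mk.injEq, mc_apply]
  rcases eq_or_ne b a with hb | hb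
  · subst hb
    rcases eq_or_ne i i1 with hi | hi
    · subst hi; simp [ha]
    · simp [Ne.symm hi, hi]
  · simp [Ne.symm hb]

lemma D_mc (h01 : i0 ≠ i1) {c : Fin M → Fin m} {a : Fin M} (ha : c a = i1) (k : ℂ) :
    D i0 i1 a (monomial (mc c) k) = monomial (mc (Function.update c a i0)) k := by
  unfold D
  rw [pderiv_monomial]
  have h1 : mc c (i1, a) = 1 := by simp [ha]
  rw [h1, Nat.cast_one, mul_one, X, monomial_mul, one_mul, mc_flip h01 ha]

lemma D_mc0 {c : Fin M → Fin m} {a : Fin M} (ha : c a ≠ i1) (k : ℂ) :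
    D i0 i1 a (monomial (mc c) k) = 0 := by
  unfold D
  rw [pderiv_monomial]
  have h1 : mc c (i1, a) = 0 := by simp [Ne.symm ha]
  rw [h1, Nat.cast_zero, mul_zero, monomial_zero, mul_zero]

lemma sg_i1 (a : Fin M) : sg i0 i1 z (i1, a) = C (z a) * X (i0, a) := if_pos rfl

lemma sg_other {v : Fin m × Fin M} (h : v.1 ≠ i1) : sg i0 i1 z v = X v := if_neg h

lemma pderiv_pderiv_comm (u v : Fin m × Fin M) (q : Pol m M) :
    pderiv u (pderiv v q) = pderiv v (pderiv u q) := by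
  rcases eq_or_ne u v with rfl | huv
  · rfl
  · conv_lhs => rw [as_sum q]
    conv_rhs => rw [as_sum q]
    rw [map_sum, map_sum, map_sum, map_sum]
    refine Finset.sum_congr rfl fun d _ => ?_
    rw [pderiv_monomial, pderiv_monomial, pderiv_monomial, pderiv_monomial]
    have h1 : (d - Finsupp.single v 1 : (Fin m × Fin M) →₀ ℕ) u = d u := by
      rw [Finsupp.tsub_apply, Finsupp.single_apply, if_neg (by exact fun h => huv h.symm)]
      rfl
    have h2 : (d - Finsupp.single u 1 : (Fin m × Fin M) →₀ ℕ) v = d v := by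
      rw [Finsupp.tsub_apply, Finsupp.single_apply, if_neg (by exact fun h => huv h)]
      rfl
    rw [h1, h2]
    have h3 : d - Finsupp.single v 1 - Finsupp.single u 1
        = d - Finsupp.single u 1 - Finsupp.single v 1 := by
      ext w
      simp only [Finsupp.tsub_apply]
      omega
    rw [h3]
    ring_nf

lemma pr_step (h01 : i0 ≠ i1) {c : Fin M → Fin m} {a : Fin M} (ha : c a = i1) (k : ℂ) :
    pr i0 i1 z (monomial (mc c) k)
      = C (z a) * pr i0 i1 z (monomial (mc (Function.update c a i0)) k) := by
  have e1 : monomial (mc c) k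
      = X ((i1, a) : Fin m × Fin M) * monomial (mc c - Finsupp.single (i1,a) 1) k := by
    rw [X, monomial_mul, one_mul, ← mc_split h01 ha]
  have e2 : monomial (mc (Function.update c a i0)) k
      = X ((i0, a) : Fin m × Fin M) * monomial (mc c - Finsupp.single (i1,a) 1) k := by
    rw [X, monomial_mul, one_mul, mc_flip h01 ha]
  unfold pr
  rw [e1, e2, map_mul, map_mul, aeval_X, aeval_X]
  show sg i0 i1 z (i1,a) * _ = C (z a) * (sg i0 i1 z (i0,a) * _)
  rw [sg_i1, sg_other h01]
  ring

lemma wt_update (h01 : i0 ≠ i1) {c : Fin M → Fin m} {a : Fin M} (ha : c a = i1) :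
    wt i1 (Function.update c a i0) = wt i1 c - 1 := by
  unfold wt
  have hfe : (univ.filter fun b => Function.update c a i0 b = i1)
      = (univ.filter fun b => c b = i1).erase a := by
    ext b
    simp only [mem_filter, mem_univ, true_and, mem_erase, Function.update_apply]
    rcases eq_or_ne b a with rfl | hb
    · simp [h01]
    · simp [hb]
  rw [hfe, card_erase_of_mem (by simp [ha])]

lemma D_sum {α : Type*} (s : Finset α) (f : α → Pol m M) (b : Fin M) :
    D i0 i1 b (∑ x ∈ s, f x) = ∑ x ∈ s, D i0 i1 b (f x) := by
  unfold D; rw [map_sum, Finset.mul_sum]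

lemma Phi_sum {α : Type*} (s : Finset α) (f : α → Pol m M) :
    Phi i0 i1 z (∑ x ∈ s, f x) = ∑ x ∈ s, Phi i0 i1 z (f x) := by
  unfold Phi
  simp_rw [map_sum, Finset.mul_sum]
  exact Finset.sum_comm

lemma Phi_mc (h01 : i0 ≠ i1) (c : Fin M → Fin m) (k : ℂ) :
    Phi i0 i1 z (monomial (mc c) k)
      = ∑ a ∈ univ.filter (fun a => c a = i1),
          C (z a) * monomial (mc (Function.update c a i0)) k := by
  unfold Phi
  have h1 : ∀ a : Fin M, C (z a) * X ((i0, a) : Fin m × Fin M) * pderiv (i1, a) (monomial (mc c) k)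
      = C (z a) * D i0 i1 a (monomial (mc c) k) := fun a => by
    rw [D, mul_assoc]
  simp_rw [h1]
  rw [← Finset.sum_filter_of_ne (p := fun a => c a = i1)
    (fun a _ hne => by
      by_contra hca
      rw [D_mc0 hca] at hne
      exact hne (mul_zero _))]
  refine Finset.sum_congr rfl fun a ha => ?_
  rw [D_mc h01 (mem_filter.1 ha).2]

lemma Phi_D (h01 : i0 ≠ i1) (b : Fin M) (q : Pol m M) :
    Phi i0 i1 z (D i0 i1 b q) = D i0 i1 b (Phi i0 i1 z q) := by
  unfold Phi D
  rw [map_sum, Finset.mul_sum]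
  refine Finset.sum_congr rfl fun a _ => ?_
  have hab : ((i0, b) : Fin m × Fin M) ≠ (i1, a) := fun h => h01 (congrArg Prod.fst h)
  have hba : ((i0, a) : Fin m × Fin M) ≠ (i1, b) := fun h => h01 (congrArg Prod.fst h)
  rw [pderiv_mul (i := (i1,a)), pderiv_X_of_ne hab]
  rw [pderiv_mul (i := (i1,b)), pderiv_mul (i := (i1,b)), pderiv_X_of_ne hba, pderiv_C]
  rw [pderiv_pderiv_comm]
  ring

lemma good_zero (n : ℕ) : Good i1 n (0 : Pol m M) := by
  intro d hd
  simp at hd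

lemma pr_Phi (h01 : i0 ≠ i1) {n : ℕ} {q : Pol m M} (hq : Good i1 n q) :
    pr i0 i1 z (Phi i0 i1 z q) = n • pr i0 i1 z q := by
  conv_lhs => rw [as_sum q]
  conv_rhs => rw [as_sum q]
  rw [Phi_sum]
  unfold pr
  rw [map_sum, map_sum, Finset.smul_sum]
  refine Finset.sum_congr rfl fun d hd => ?_
  obtain ⟨c, rfl, hwt⟩ := hq d hd
  rw [Phi_mc h01, map_sum]
  have h2 : ∀ a ∈ univ.filter (fun a => c a = i1),
      aeval (sg i0 i1 z) (C (z a) * monomial (mc (Function.update c a i0)) (coeff (mc c) q))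
        = aeval (sg i0 i1 z) (monomial (mc c) (coeff (mc c) q)) := by
    intro a ha
    rw [map_mul, aeval_C]
    have := pr_step (z := z) h01 (mem_filter.1 ha).2 (coeff (mc c) q)
    unfold pr at this
    rw [this]
    rfl
  rw [Finset.sum_congr rfl h2, Finset.sum_const]
  unfold wt at hwt
  rw [hwt]

lemma pr_good0 {q : Pol m M} (hq : Good i1 0 q) : pr i0 i1 z q = q := by
  conv_rhs => rw [as_sum q]
  conv_lhs => rw [as_sum q]
  unfold pr
  rw [map_sum]
  refine Finset.sum_congr rfl fun d hd => ?_
  obtain ⟨c, rfl, hwt⟩ := hq d hd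
  have hc : ∀ a, c a ≠ i1 := by
    intro a ha
    have h1 : a ∈ univ.filter (fun b => c b = i1) := by simp [ha]
    rw [Finset.card_eq_zero.1 hwt] at h1
    exact absurd h1 (Finset.notMem_empty a)
  rw [aeval_monomial, monomial_eq]
  rw [algebraMap_eq]
  congr 1
  · refine Finsupp.prod_congr fun v hv => ?_
    have hv1 : v.1 = c v.2 := by
      have := Finsupp.mem_support_iff.1 hv
      simp only [mc_apply] at this
      by_contra h
      exact this (if_neg h)
    rw [sg_other (hv1 ▸ hc v.2)]

lemma Phi_good0 (h01 : i0 ≠ i1) {q : Pol m M} (hq : Good i1 0 q) : Phi i0 i1 z q = 0 := by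
  conv_lhs => rw [as_sum q]
  rw [Phi_sum]
  refine Finset.sum_eq_zero fun d hd => ?_
  obtain ⟨c, rfl, hwt⟩ := hq d hd
  rw [Phi_mc h01, Finset.card_eq_zero.1 hwt, Finset.sum_empty]

lemma Phi_good (h01 : i0 ≠ i1) {n : ℕ} {q : Pol m M} (hq : Good i1 (n+1) q) :
    Good i1 n (Phi i0 i1 z q) := by
  intro d hd
  rw [show Phi i0 i1 z q = ∑ d ∈ q.support, Phi i0 i1 z (monomial d (coeff d q)) from by
    conv_lhs => rw [as_sum q, Phi_sum]] at hd
  obtain ⟨d', hd', hmem⟩ := Finset.mem_biUnion.1 (MvPolynomial.support_sum hd)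
  obtain ⟨c, rfl, hwt⟩ := hq d' hd'
  rw [Phi_mc h01] at hmem
  obtain ⟨a, ha, hmem2⟩ := Finset.mem_biUnion.1 (MvPolynomial.support_sum hmem)
  have ha' := (mem_filter.1 ha).2
  rw [← smul_eq_C_mul] at hmem2
  have h3 := support_monomial_subset (MvPolynomial.support_smul hmem2)
  refine ⟨Function.update c a i0, Finset.mem_singleton.1 h3, ?_⟩
  rw [wt_update h01 ha', hwt]
  omega

lemma D_good (h01 : i0 ≠ i1) {n : ℕ} {q : Pol m M} (hq : Good i1 n q) (b : Fin M) :
    Good i1 (n-1) (D i0 i1 b q) := by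
  intro d hd
  rw [show D i0 i1 b q = ∑ d ∈ q.support, D i0 i1 b (monomial d (coeff d q)) from by
    conv_lhs => rw [as_sum q, D_sum]] at hd
  obtain ⟨d', hd', hmem⟩ := Finset.mem_biUnion.1 (MvPolynomial.support_sum hd)
  obtain ⟨c, rfl, hwt⟩ := hq d' hd'
  by_cases hb : c b = i1
  · rw [D_mc h01 hb] at hmem
    have h3 := support_monomial_subset hmem
    exact ⟨Function.update c b i0, Finset.mem_singleton.1 h3, by rw [wt_update h01 hb, hwt]⟩
  · rw [D_mc0 hb] at hmem
    simp at hmem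

lemma Phi_good' (h01 : i0 ≠ i1) {n : ℕ} {q : Pol m M} (hq : Good i1 n q) :
    Good i1 (n-1) (Phi i0 i1 z q) := by
  cases n with
  | zero => rw [Phi_good0 h01 hq]; exact good_zero 0
  | succ n => exact Phi_good h01 hq

lemma Phi_iter_good (h01 : i0 ≠ i1) {n : ℕ} {q : Pol m M} (hq : Good i1 n q) (j : ℕ) :
    Good i1 (n - j) ((Phi i0 i1 z)^[j] q) := by
  induction j generalizing n q with
  | zero => exact hq
  | succ j ih =>
    rw [Function.iterate_succ_apply]
    have := ih (Phi_good' (z := z) h01 hq)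
    rwa [show n - 1 - j = n - (j+1) by omega] at this

lemma Phi_iter_zero (h01 : i0 ≠ i1) {n : ℕ} {q : Pol m M} (hq : Good i1 n q)
    {k : ℕ} (hk : n < k) : (Phi i0 i1 z)^[k] q = 0 := by
  obtain ⟨j, rfl⟩ : ∃ j, k = j + 1 := ⟨k - 1, by omega⟩
  rw [Function.iterate_succ_apply']
  have h1 : n - j = 0 := by omega
  have h2 := Phi_iter_good (z := z) h01 hq j
  rw [h1] at h2
  exact Phi_good0 h01 h2

lemma Phi_iter_eq (h01 : i0 ≠ i1) : ∀ {n : ℕ} {q : Pol m M}, Good i1 n q →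
    (Phi i0 i1 z)^[n] q = (Nat.factorial n) • pr i0 i1 z q := by
  intro n
  induction n with
  | zero =>
    intro q hq
    simp [pr_good0 (z := z) hq]
  | succ n ih =>
    intro q hq
    rw [Function.iterate_succ_apply, ih (Phi_good (z := z) h01 hq), pr_Phi h01 hq, smul_smul]
    congr 1
    rw [Nat.factorial_succ, Nat.mul_comm]

def Dl (i0 i1 : Fin m) (L : List (Fin M)) (q : Pol m M) : Pol m M :=
  L.foldr (fun b r => D i0 i1 b r) q

def updL (i0 : Fin m) (L : List (Fin M)) (c : Fin M → Fin m) : Fin M → Fin m :=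
  fun a => if a ∈ L then i0 else c a

lemma Dl_nil (q : Pol m M) : Dl i0 i1 [] q = q := rfl

lemma Dl_cons (b : Fin M) (L : List (Fin M)) (q : Pol m M) :
    Dl i0 i1 (b::L) q = D i0 i1 b (Dl i0 i1 L q) := rfl

lemma D_zero (b : Fin M) : D i0 i1 b (0 : Pol m M) = 0 := by
  unfold D; rw [map_zero, mul_zero]

lemma Phi_zero : Phi i0 i1 z (0 : Pol m M) = 0 := by
  unfold Phi
  refine Finset.sum_eq_zero fun a _ => ?_
  rw [map_zero, mul_zero]

lemma Dl_zero (L : List (Fin M)) : Dl i0 i1 L (0 : Pol m M) = 0 := by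
  induction L with
  | nil => rfl
  | cons b L ih => rw [Dl_cons, ih, D_zero]

lemma Dl_sum {α : Type*} (s : Finset α) (f : α → Pol m M) (L : List (Fin M)) :
    Dl i0 i1 L (∑ x ∈ s, f x) = ∑ x ∈ s, Dl i0 i1 L (f x) := by
  induction L with
  | nil => rfl
  | cons b L ih => rw [Dl_cons, ih, D_sum]; rfl

lemma Dl_Phi (h01 : i0 ≠ i1) (L : List (Fin M)) (q : Pol m M) :
    Dl i0 i1 L (Phi i0 i1 z q) = Phi i0 i1 z (Dl i0 i1 L q) := by
  induction L with
  | nil => rfl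
  | cons b L ih => rw [Dl_cons, ih, ← Phi_D h01, Dl_cons]

lemma Dl_Phi_iter (h01 : i0 ≠ i1) (L : List (Fin M)) (k : ℕ) :
    ∀ q : Pol m M, Dl i0 i1 L ((Phi i0 i1 z)^[k] q) = (Phi i0 i1 z)^[k] (Dl i0 i1 L q) := by
  induction k with
  | zero => intro q; rfl
  | succ k ih =>
    intro q
    rw [Function.iterate_succ_apply, Function.iterate_succ_apply, ih (Phi i0 i1 z q),
      Dl_Phi h01]

lemma Dl_good (h01 : i0 ≠ i1) {n : ℕ} {q : Pol m M} (hq : Good i1 n q) (L : List (Fin M)) :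
    Good i1 (n - L.length) (Dl i0 i1 L q) := by
  induction L with
  | nil => exact hq
  | cons b L ih =>
    rw [Dl_cons]
    have := D_good h01 ih b
    rwa [show n - L.length - 1 = n - (b::L).length by simp; omega] at this

lemma Dl_mc (h01 : i0 ≠ i1) {L : List (Fin M)} (hL : L.Nodup) (c : Fin M → Fin m) (k : ℂ) :
    Dl i0 i1 L (monomial (mc c) k)
      = if (∀ b ∈ L, c b = i1) then monomial (mc (updL i0 L c)) k else 0 := by
  induction L with
  | nil =>
    rw [Dl_nil, if_pos (by intro b hb; exact absurd hb List.not_mem_nil)]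
    have hupd : updL i0 [] c = c := by funext a; simp [updL]
    rw [hupd]
  | cons b L ih =>
    have hbL : b ∉ L := (List.nodup_cons.1 hL).1
    have hLnd : L.Nodup := (List.nodup_cons.1 hL).2
    rw [Dl_cons]
    by_cases hall : ∀ x ∈ L, c x = i1
    · rw [ih hLnd, if_pos hall]
      have hupd : updL i0 L c b = c b := by
        simp [updL, hbL]
      by_cases hb : c b = i1
      · rw [D_mc h01 (by rw [hupd, hb]) k]
        rw [if_pos (by intro x hx; rcases List.mem_cons.1 hx with rfl | hx'; exacts [hb, hall x hx'])]
        have hupd2 : Function.update (updL i0 L c) b i0 = updL i0 (b::L) c := by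
          funext a
          simp only [Function.update_apply, updL, List.mem_cons]
          rcases eq_or_ne a b with rfl | hab
          · simp
          · simp [hab]
        rw [hupd2]
      · rw [D_mc0 (by rw [hupd]; exact hb) k,
          if_neg (by intro hcon; exact hb (hcon b List.mem_cons_self))]
    · rw [ih hLnd, if_neg hall, D_zero,
        if_neg (by intro hcon; exact hall fun x hx => hcon x (List.mem_cons_of_mem b hx))]

lemma inj_of_Dl (h01 : i0 ≠ i1) {k : ℕ} {q : Pol m M} (hG : Good i1 k q)
    (h : ∀ B : Finset (Fin M), B.card = k → Dl i0 i1 B.toList q = 0) : q = 0 := by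
  by_contra hq
  obtain ⟨d, hd⟩ := Finset.nonempty_of_ne_empty (mt MvPolynomial.support_eq_empty.1 hq)
  obtain ⟨c, rfl, hwt⟩ := hG d hd
  set B : Finset (Fin M) := univ.filter (fun a => c a = i1) with hBdef
  have hB : B.card = k := hwt
  have h0 := h B hB
  have hmemL : ∀ b ∈ B.toList, c b = i1 := by
    intro b hb
    exact (mem_filter.1 (Finset.mem_toList.1 hb)).2
  have hco : coeff (mc (updL i0 B.toList c)) (Dl i0 i1 B.toList q) = coeff (mc c) q := by
    conv_lhs => rw [as_sum q, Dl_sum]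
    rw [MvPolynomial.coeff_sum]
    rw [Finset.sum_eq_single (mc c)]
    · rw [Dl_mc h01 B.nodup_toList c _, if_pos hmemL, coeff_monomial, if_pos rfl]
    · intro d' hd' hne
      obtain ⟨c', rfl, hwt'⟩ := hG d' hd'
      rw [Dl_mc h01 B.nodup_toList c' _]
      by_cases hall : ∀ b ∈ B.toList, c' b = i1
      · rw [if_pos hall, coeff_monomial, if_neg ?_]
        intro heq
        have hupd := mc_injective heq
        have hcc : c' = c := by
          funext a
          by_cases haB : a ∈ B
          · rw [(mem_filter.1 haB).2, hall a (Finset.mem_toList.2 haB)]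
          · have h5 := congrFun hupd a
            simp only [updL] at h5
            rw [if_neg (fun h6 => haB (Finset.mem_toList.1 h6)),
              if_neg (fun h6 => haB (Finset.mem_toList.1 h6))] at h5
            exact h5
        exact hne (by rw [hcc])
      · rw [if_neg hall, coeff_zero]
    · intro hns
      exact absurd hd hns
  rw [h0, coeff_zero] at hco
  exact (Finsupp.mem_support_iff.1 hd) hco.symm

theorem main (h01 : i0 ≠ i1) {N ℓ : ℕ} {p : Pol m M} (hG : Good i1 N p) :
    (Phi i0 i1 z)^[ℓ+1] p = 0 ↔
    ∀ B : Finset (Fin M), B.card + ℓ + 1 ≤ N → pr i0 i1 z (Dl i0 i1 B.toList p) = 0 := by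
  constructor
  · intro hiter B hB
    have hlen : B.toList.length = B.card := Finset.length_toList B
    have hgood : Good i1 (N - B.card) (Dl i0 i1 B.toList p) := by
      have := Dl_good h01 hG B.toList
      rwa [hlen] at this
    have heq := Phi_iter_eq (z := z) h01 hgood
    have hz0 : (Phi i0 i1 z)^[N - B.card] (Dl i0 i1 B.toList p) = 0 := by
      have hsplit : (N - B.card) = (N - B.card - (ℓ+1)) + (ℓ+1) := by omega
      rw [hsplit, Function.iterate_add_apply, ← Dl_Phi_iter h01, hiter, Dl_zero]
      exact Function.iterate_fixed (Phi_zero (z := z)) _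
    rw [hz0] at heq
    have heq2 : ((Nat.factorial (N - B.card) : ℂ)) • pr i0 i1 z (Dl i0 i1 B.toList p) = 0 := by
      rw [Nat.cast_smul_eq_nsmul]
      exact heq.symm
    rcases smul_eq_zero.1 heq2 with h1 | h1
    · exact absurd h1 (Nat.cast_ne_zero.2 (Nat.factorial_ne_zero _))
    · exact h1
  · intro hvan
    by_cases hN : N < ℓ + 1
    · exact Phi_iter_zero h01 hG hN
    · push_neg at hN
      apply inj_of_Dl h01 (Phi_iter_good h01 hG (ℓ+1))
      intro B hB
      rw [Dl_Phi_iter h01]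
      have hgood : Good i1 (ℓ+1) (Dl i0 i1 B.toList p) := by
        have := Dl_good h01 hG B.toList
        rwa [Finset.length_toList, hB, show N - (N - (ℓ+1)) = ℓ+1 by omega] at this
      rw [Phi_iter_eq h01 hgood, hvan B (by omega), smul_zero]

lemma eval_pr (v : Fin m × Fin M → ℂ) (q : Pol m M) :
    eval v (pr i0 i1 z q) = eval (fun u => eval v (sg i0 i1 z u)) q := by
  unfold pr
  rw [aeval_def, algebraMap_eq, ← eval_assoc]
  rfl

/-- vanishing on the subspace `A(z)` is equivalent to `pr q = 0`. -/
lemma pr_eq_zero_iff (h01 : i0 ≠ i1) (q : Pol m M) :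
    pr i0 i1 z q = 0 ↔
      ∀ v : Fin m × Fin M → ℂ,
        (∀ a : Fin M, v (i1, a) = z a * v (i0, a)) → eval v q = 0 := by
  constructor
  · intro h v hv
    have h2 : (fun u : Fin m × Fin M => eval v (sg i0 i1 z u)) = v := by
      funext u
      unfold sg
      by_cases hu : u.1 = i1
      · rw [if_pos hu]
        simp only [map_mul, eval_C, eval_X]
        rw [← hv u.2, ← hu]
      · rw [if_neg hu, eval_X]
    have h3 := eval_pr (z := z) (i0 := i0) (i1 := i1) v q
    rw [h, h2, map_zero] at h3
    exact h3.symm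
  · intro h
    apply MvPolynomial.funext (R := ℂ)
    intro u
    rw [map_zero, eval_pr]
    set v : Fin m × Fin M → ℂ := fun w => if w.1 = i1 then z w.2 * u (i0, w.2) else u w with hvdef
    have h2 : (fun w : Fin m × Fin M => eval u (sg i0 i1 z w)) = v := by
      funext w
      unfold sg
      by_cases hw : w.1 = i1
      · rw [if_pos hw, hvdef]
        simp only [map_mul, eval_C, eval_X]
        rw [if_pos hw]
      · rw [if_neg hw, eval_X, hvdef]
        simp only [if_neg hw]
    rw [h2]
    apply h
    intro a
    simp [v, h01]

lemma scale_eq (s : Fin m → ℂ) (q : Pol m M) :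
    aeval (fun v : Fin m × Fin M => C (s v.1) * X v) q
      = ∑ d ∈ q.support, monomial d ((∏ i : Fin m, s i ^ (∑ a, d (i,a))) * coeff d q) := by
  conv_lhs => rw [as_sum q]
  rw [map_sum]
  refine Finset.sum_congr rfl fun d _ => ?_
  rw [aeval_monomial, algebraMap_eq]
  have h1 : (d.prod fun v e => (C (s v.1) * X v : Pol m M) ^ e)
      = C (d.prod fun v e => s v.1 ^ e) * d.prod fun v e => (X v : Pol m M) ^ e := by
    rw [show (d.prod fun v e => (C (s v.1) * X v : Pol m M) ^ e)
        = d.prod fun v e => (C (s v.1 ^ e) * X v ^ e : Pol m M) from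
      Finsupp.prod_congr fun v _ => by rw [mul_pow, C_pow]]
    rw [Finsupp.prod_mul]
    congr 1
    unfold Finsupp.prod
    exact (map_prod (C : ℂ →+* Pol m M) (fun v => s v.1 ^ d v) d.support).symm
  have h2 : (d.prod fun v e => s v.1 ^ e) = ∏ i : Fin m, s i ^ (∑ a, d (i,a)) := by
    rw [Finsupp.prod_fintype _ _ (fun v => pow_zero _), Fintype.prod_prod_type]
    exact Finset.prod_congr rfl fun i _ =>
      Finset.prod_pow_eq_pow_sum univ (fun a => d (i,a)) (s i)
  rw [h1, h2, monomial_eq, map_mul]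
  ring

lemma colsum_eq {p : Pol m M}
    (hinv : ∀ g : Matrix.SpecialLinearGroup (Fin m) ℂ,
      aeval (fun v : Fin m × Fin M =>
        ∑ j : Fin m, C (g.1 v.1 j) * X (j, v.2)) p = p)
    {d : Fin m × Fin M →₀ ℕ} (hd : d ∈ p.support) (i j : Fin m) :
    (∑ a, d (i,a)) = ∑ a, d (j,a) := by
  rcases eq_or_ne i j with rfl | hij
  · rfl
  set s : Fin m → ℂ := fun k => if k = i then 2 else if k = j then 2⁻¹ else 1 with hs
  have hprod : ∀ n : Fin m → ℕ, (∏ k : Fin m, s k ^ n k)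
      = 2 ^ (n i) * (2:ℂ)⁻¹ ^ (n j) := by
    intro n
    rw [← Finset.mul_prod_erase univ _ (mem_univ i)]
    have hjmem : j ∈ (univ : Finset (Fin m)).erase i :=
      Finset.mem_erase.2 ⟨Ne.symm hij, mem_univ j⟩
    rw [← Finset.mul_prod_erase _ _ hjmem]
    have h1 : ∏ k ∈ ((univ : Finset (Fin m)).erase i).erase j, s k ^ n k = 1 := by
      refine Finset.prod_eq_one fun k hk => ?_
      have hkj : k ≠ j := Finset.ne_of_mem_erase hk
      have hki : k ≠ i := Finset.ne_of_mem_erase (Finset.mem_of_mem_erase hk)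
      simp only [hs, if_neg hki, if_neg hkj, one_pow]
    have hsi : s i = 2 := by simp [hs]
    have hsj : s j = 2⁻¹ := by simp [hs, Ne.symm hij]
    rw [h1, mul_one, hsi, hsj]
  have hdet : Matrix.det (Matrix.diagonal s) = 1 := by
    rw [Matrix.det_diagonal]
    have h2 : ∏ k : Fin m, s k = ∏ k : Fin m, s k ^ (fun _ => 1 : Fin m → ℕ) k := by
      simp
    rw [h2, hprod]
    norm_num
  have hg := hinv ⟨Matrix.diagonal s, hdet⟩
  have hsub : (fun v : Fin m × Fin M =>
      ∑ k : Fin m, C ((⟨Matrix.diagonal s, hdet⟩ :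
        Matrix.SpecialLinearGroup (Fin m) ℂ).1 v.1 k) * X (k, v.2))
      = fun v : Fin m × Fin M => C (s v.1) * X v := by
    funext v
    rw [Finset.sum_eq_single v.1 (fun k _ hk => by
        rw [show (⟨Matrix.diagonal s, hdet⟩ :
            Matrix.SpecialLinearGroup (Fin m) ℂ).1 v.1 k = 0 from
          Matrix.diagonal_apply_ne' s hk, map_zero, zero_mul])
      (fun h => absurd (mem_univ v.1) h)]
    rw [show (⟨Matrix.diagonal s, hdet⟩ :
        Matrix.SpecialLinearGroup (Fin m) ℂ).1 v.1 v.1 = s v.1 from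
      Matrix.diagonal_apply_eq s v.1]
  rw [hsub, scale_eq] at hg
  have hco := congrArg (coeff d) hg
  rw [MvPolynomial.coeff_sum, Finset.sum_eq_single d
    (fun d' _ hne => by rw [coeff_monomial, if_neg hne])
    (fun hns => absurd hd hns), coeff_monomial, if_pos rfl] at hco
  have hc0 : coeff d p ≠ 0 := MvPolynomial.mem_support_iff.1 hd
  have hfac : (∏ k : Fin m, s k ^ (∑ a, d (k,a))) = 1 := by
    have := mul_right_cancel₀ hc0 (hco.trans (one_mul (coeff d p)).symm)
    exact this
  rw [hprod] at hfac
  rw [inv_pow] at hfac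
  have h2 : (2:ℂ) ^ (∑ a, d (i,a)) = 2 ^ (∑ a, d (j,a)) :=
    (mul_inv_eq_one₀ (pow_ne_zero _ two_ne_zero)).1 hfac
  have h3 : ((2 ^ (∑ a, d (i,a)) : ℕ) : ℂ) = ((2 ^ (∑ a, d (j,a)) : ℕ) : ℂ) := by
    push_cast
    exact h2
  exact Nat.pow_right_injective le_rfl (Nat.cast_injective h3)

lemma exists_c {d : Fin m × Fin M →₀ ℕ} (h : ∀ a, (∑ i : Fin m, d (i,a)) = 1) :
    ∃ c : Fin M → Fin m, d = mc c := by
  have h' : ∀ a : Fin M, ∃ i : Fin m, d (i,a) = 1 ∧ ∀ j : Fin m, j ≠ i → d (j,a) = 0 := by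
    intro a
    have hne : ∃ i, d (i,a) ≠ 0 := by
      by_contra hc
      push_neg at hc
      have ha := h a
      rw [Finset.sum_eq_zero (fun i _ => hc i)] at ha
      exact one_ne_zero ha.symm
    obtain ⟨i, hi⟩ := hne
    have hle : d (i,a) ≤ 1 :=
      h a ▸ Finset.single_le_sum (f := fun k => d (k,a)) (fun k _ => Nat.zero_le _) (mem_univ i)
    have h3 : d (i,a) + ∑ k ∈ univ.erase i, d (k,a) = 1 := by
      rw [Finset.add_sum_erase univ (fun k => d (k,a)) (mem_univ i)]
      exact h a
    refine ⟨i, by omega, fun j hj => ?_⟩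
    have h2 : d (j,a) ≤ ∑ k ∈ univ.erase i, d (k,a) :=
      Finset.single_le_sum (f := fun k => d (k,a)) (fun k _ => Nat.zero_le _)
        (Finset.mem_erase.2 ⟨hj, mem_univ j⟩)
    omega
  choose c hc1 hc2 using h'
  refine ⟨c, ?_⟩
  ext ⟨i, b⟩
  rw [mc_apply]
  rcases eq_or_ne i (c b) with rfl | hne
  · rw [if_pos rfl]
    exact hc1 b
  · rw [if_neg hne]
    exact hc2 b i hne

end
end CB

/-- "Symmetry and vanishing" description of conformal blocks for `λ = (N,…,N)`:
an `SL_m`-invariant polynomial `p` in the multilinear subspace `V^{⊗ mN}` of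
`ℂ[y_a^{(i)}]` satisfies the level-`ℓ` conformal block equation
`(e^z_{1,m})^{ℓ+1} p = 0` if and only if `p` vanishes to order `≥ N - ℓ` on the
subspace `A(z) = {y : y_a^{(m)} = z_a y_a^{(1)} ∀ a}`, the latter being expressed
by the vanishing on `A(z)` of `∂_B p = (∏_{b∈B} y_b^{(1)} ∂/∂y_b^{(m)}) p` for all
subsets `B` with `|B| ≤ N - ℓ - 1`. Here `X (i, a)` stands for `y_a^{(i)}`,
`i = 0` corresponds to the superscript `(1)` and `i = m - 1` to `(m)`. -/
theorem conformal_block_iff_vanishing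
    (m N ℓ : ℕ) (hm : 2 ≤ m)
    (z : Fin (m * N) → ℂ) (hz : Function.Injective z)
    (p : MvPolynomial (Fin m × Fin (m * N)) ℂ)
    (hmultilinear : ∀ d ∈ p.support, ∀ a : Fin (m * N), (∑ i : Fin m, d (i, a)) = 1)
    (hinv : ∀ g : Matrix.SpecialLinearGroup (Fin m) ℂ,
      aeval (fun v : Fin m × Fin (m * N) =>
        ∑ j : Fin m, C (g.1 v.1 j) * X (j, v.2)) p = p) :
    (fun q => ∑ a : Fin (m * N),
        C (z a) * X ((⟨0, by omega⟩ : Fin m), a) * pderiv (⟨m - 1, by omega⟩, a) q)^[ℓ + 1]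
      p = 0 ↔
    ∀ B : Finset (Fin (m * N)), B.card + ℓ + 1 ≤ N →
      ∀ v : Fin m × Fin (m * N) → ℂ,
        (∀ a : Fin (m * N), v (⟨m - 1, by omega⟩, a) = z a * v (⟨0, by omega⟩, a)) →
        MvPolynomial.eval v
          (B.toList.foldr
            (fun b q => X ((⟨0, by omega⟩ : Fin m), b) * pderiv (⟨m - 1, by omega⟩, b) q)
            p) = 0 := by
  set i0 : Fin m := ⟨0, by omega⟩ with hi0
  set i1 : Fin m := ⟨m - 1, by omega⟩ with hi1
  have h01 : i0 ≠ i1 := by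
    rw [hi0, hi1]
    intro hc
    have := congrArg Fin.val hc
    simp only at this
    omega
  have hGood : CB.Good i1 N p := by
    intro d hd
    obtain ⟨c, rfl⟩ := CB.exists_c (hmultilinear d hd)
    refine ⟨c, rfl, ?_⟩
    have hsum : ∀ k : Fin m, (∑ a, (CB.mc c) (k,a)) = ∑ a, (CB.mc c) (i1,a) :=
      fun k => CB.colsum_eq hinv hd k i1
    have htot : ∑ k : Fin m, ∑ a, (CB.mc c) (k,a) = m * N := by
      rw [Finset.sum_comm]
      rw [Finset.sum_congr rfl (fun a _ => hmultilinear _ hd a)]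
      simp [Finset.card_univ, mul_comm]
    have hmm : ∑ k : Fin m, ∑ a, (CB.mc c) (k,a) = m * (∑ a, (CB.mc c) (i1,a)) := by
      rw [Finset.sum_congr rfl (fun k _ => hsum k), Finset.sum_const, Finset.card_univ,
        Fintype.card_fin, smul_eq_mul]
    have hN : (∑ a, (CB.mc c) (i1,a)) = N := by
      have h5 : m * (∑ a, (CB.mc c) (i1,a)) = m * N := by rw [← hmm, htot]
      exact Nat.eq_of_mul_eq_mul_left (by omega) h5
    unfold CB.wt
    rw [Finset.card_filter]
    rw [show (∑ a : Fin (m*N), if c a = i1 then 1 else 0)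
        = ∑ a : Fin (m*N), (CB.mc c) (i1,a) from
      Finset.sum_congr rfl fun a _ => by rw [CB.mc_apply]; simp [eq_comm]]
    exact hN
  have hmain := CB.main (i0 := i0) (i1 := i1) (z := z) h01 (N := N) (ℓ := ℓ) hGood
  constructor
  · intro hl B hB v hv
    have h2 := (hmain.1 hl) B hB
    exact (CB.pr_eq_zero_iff h01 _).1 h2 v hv
  · intro hr
    apply hmain.2
    intro B hB
    rw [CB.pr_eq_zero_iff h01]
    intro v hv
    exact hr B hB v hv
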